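/- Let H > 0, κ ≥ 0, h = √3·H/2, and let x' ∈ ℝ³ with |x'| ≤ h. Then for every s ∈ (0, 1), θ ∈ [0, π], φ ∈ [0, 2π), the function (s, θ, φ) ↦ g_S(x(s, θ, φ), x'), where x(s, θ, φ) = (h/s)·(sin θ cos φ, sin θ sin φ, cos θ) and g_S(x, x') = (|x|/|x − x'|)·e^{iκ(|x − x'| − |x|)}, is (real-)analytic at the point (s, θ, φ). -/

import Mathlib

set_option autoImplicit false

noncomputable section

lemma analyticAt_rsin (x : ℝ) : AnalyticAt ℝ Real.sin x := by
  have h : AnalyticAt ℝ (fun y : ℝ => (Complex.sin (y : ℂ)).re) x :=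
    (Complex.reCLM.analyticAt _).comp
      (((Complex.differentiable_sin.analyticAt _).restrictScalars).comp
        (Complex.ofRealCLM.analyticAt x))
  simpa [Complex.sin_ofReal_re] using h

lemma analyticAt_rcos (x : ℝ) : AnalyticAt ℝ Real.cos x := by
  have h : AnalyticAt ℝ (fun y : ℝ => (Complex.cos (y : ℂ)).re) x :=
    (Complex.reCLM.analyticAt _).comp
      (((Complex.differentiable_cos.analyticAt _).restrictScalars).comp
        (Complex.ofRealCLM.analyticAt x))
  simpa [Complex.cos_ofReal_re] using h

lemma analyticAt_rlog {x : ℝ} (hx : 0 < x) : AnalyticAt ℝ Real.log x := by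
  have hm : (x : ℂ) ∈ Complex.slitPlane := by
    simp [Complex.mem_slitPlane_iff, hx]
  have h : AnalyticAt ℝ (fun y : ℝ => (Complex.log (y : ℂ)).re) x :=
    (Complex.reCLM.analyticAt _).comp
      (((analyticAt_clog hm).restrictScalars).comp (Complex.ofRealCLM.analyticAt x))
  simpa [Complex.log_ofReal_re] using h

lemma analyticAt_rsqrt {x : ℝ} (hx : 0 < x) : AnalyticAt ℝ Real.sqrt x := by
  have h : AnalyticAt ℝ (fun y : ℝ => Real.exp (Real.log y / 2)) x :=
    ((analyticAt_rlog hx).div analyticAt_const two_ne_zero).rexp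
  apply h.congr
  filter_upwards [isOpen_Ioi.eventually_mem hx] with y hy
  rw [← Real.log_sqrt (le_of_lt hy), Real.exp_log (Real.sqrt_pos.2 hy)]

/-- The spherical parametrization `x̃(r, θ, φ)` of `ℝ³`. -/
noncomputable def sph (r θ φ : ℝ) : EuclideanSpace ℝ (Fin 3) :=
  WithLp.toLp 2 ![r * Real.sin θ * Real.cos φ, r * Real.sin θ * Real.sin φ, r * Real.cos θ]

/-- The analytic factor `g_S(x, x') = (‖x‖/‖x − x'‖) · exp(iκ(‖x − x'‖ − ‖x‖))`. -/
noncomputable def gS (κ : ℝ) (x x' : EuclideanSpace ℝ (Fin 3)) : ℂ :=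
  (↑(‖x‖ / ‖x - x'‖) : ℂ) * Complex.exp (Complex.I * κ * (↑‖x - x'‖ - ↑‖x‖))

lemma euc_norm_eq (v : EuclideanSpace ℝ (Fin 3)) :
    ‖v‖ = Real.sqrt (v 0 ^ 2 + v 1 ^ 2 + v 2 ^ 2) := by
  rw [EuclideanSpace.norm_eq]
  simp [Fin.sum_univ_three, Real.norm_eq_abs, sq_abs, add_assoc]

lemma sph_apply0 (r θ φ : ℝ) : sph r θ φ 0 = r * Real.sin θ * Real.cos φ := rfl
lemma sph_apply1 (r θ φ : ℝ) : sph r θ φ 1 = r * Real.sin θ * Real.sin φ := rfl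
lemma sph_apply2 (r θ φ : ℝ) : sph r θ φ 2 = r * Real.cos θ := rfl

lemma norm_sph (r θ φ : ℝ) (hr : 0 ≤ r) : ‖sph r θ φ‖ = r := by
  rw [euc_norm_eq, sph_apply0, sph_apply1, sph_apply2]
  have h1 := Real.sin_sq_add_cos_sq θ
  have h2 := Real.sin_sq_add_cos_sq φ
  have : (r * Real.sin θ * Real.cos φ) ^ 2 + (r * Real.sin θ * Real.sin φ) ^ 2
      + (r * Real.cos θ) ^ 2 = r ^ 2 := by
    linear_combination r ^ 2 * Real.sin θ ^ 2 * h2 + r ^ 2 * h1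
  rw [this, Real.sqrt_sq hr]

/-- with `h = √3·H/2` and `‖x'‖ ≤ h`, the function
`(s, θ, φ) ↦ g_S(x(s,θ,φ), x')`, where `x(s,θ,φ) = x̃(h/s, θ, φ)`, is real-analytic
at every point with `s ∈ (0,1)`, `θ ∈ [0,π]`, `φ ∈ [0,2π)`. -/
theorem analyticAt_gS_in_s_theta_phi (H κ : ℝ) (hH : 0 < H) (hκ : 0 ≤ κ)
    (x' : EuclideanSpace ℝ (Fin 3)) (hx' : ‖x'‖ ≤ Real.sqrt 3 * H / 2)
    (s θ φ : ℝ) (hs : s ∈ Set.Ioo (0 : ℝ) 1) (hθ : θ ∈ Set.Icc 0 Real.pi)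
    (hφ : φ ∈ Set.Ico 0 (2 * Real.pi)) :
    AnalyticAt ℝ
      (fun p : ℝ × ℝ × ℝ => gS κ (sph (Real.sqrt 3 * H / 2 / p.1) p.2.1 p.2.2) x')
      (s, θ, φ) := by
  set h : ℝ := Real.sqrt 3 * H / 2 with hh
  have hhpos : 0 < h := by
    have : 0 < Real.sqrt 3 := Real.sqrt_pos.2 (by norm_num)
    positivity
  obtain ⟨hs0, hs1⟩ := hs
  have hrpos : 0 < h / s := div_pos hhpos hs0
  -- coordinate functions
  set p0 : ℝ × ℝ × ℝ := (s, θ, φ) with hp0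
  have hfst : AnalyticAt ℝ (fun p : ℝ × ℝ × ℝ => p.1) p0 := analyticAt_fst
  have hth : AnalyticAt ℝ (fun p : ℝ × ℝ × ℝ => p.2.1) p0 := analyticAt_fst.comp analyticAt_snd
  have hph : AnalyticAt ℝ (fun p : ℝ × ℝ × ℝ => p.2.2) p0 := analyticAt_snd.comp analyticAt_snd
  have hr : AnalyticAt ℝ (fun p : ℝ × ℝ × ℝ => h / p.1) p0 :=
    analyticAt_const.div hfst (ne_of_gt hs0)
  have hsin1 : AnalyticAt ℝ (fun p : ℝ × ℝ × ℝ => Real.sin p.2.1) p0 :=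
    (analyticAt_rsin _).comp hth
  have hcos1 : AnalyticAt ℝ (fun p : ℝ × ℝ × ℝ => Real.cos p.2.1) p0 :=
    (analyticAt_rcos _).comp hth
  have hsin2 : AnalyticAt ℝ (fun p : ℝ × ℝ × ℝ => Real.sin p.2.2) p0 :=
    (analyticAt_rsin _).comp hph
  have hcos2 : AnalyticAt ℝ (fun p : ℝ × ℝ × ℝ => Real.cos p.2.2) p0 :=
    (analyticAt_rcos _).comp hph
  set f0 : ℝ × ℝ × ℝ → ℝ := fun p => h / p.1 * Real.sin p.2.1 * Real.cos p.2.2 with hf0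
  set f1 : ℝ × ℝ × ℝ → ℝ := fun p => h / p.1 * Real.sin p.2.1 * Real.sin p.2.2 with hf1
  set f2 : ℝ × ℝ × ℝ → ℝ := fun p => h / p.1 * Real.cos p.2.1 with hf2
  have af0 : AnalyticAt ℝ f0 p0 := (hr.mul hsin1).mul hcos2
  have af1 : AnalyticAt ℝ f1 p0 := (hr.mul hsin1).mul hsin2
  have af2 : AnalyticAt ℝ f2 p0 := hr.mul hcos1
  set q1 : ℝ × ℝ × ℝ → ℝ := fun p => f0 p ^ 2 + f1 p ^ 2 + f2 p ^ 2 with hq1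
  set q2 : ℝ × ℝ × ℝ → ℝ :=
    fun p => (f0 p - x' 0) ^ 2 + (f1 p - x' 1) ^ 2 + (f2 p - x' 2) ^ 2 with hq2
  have aq1 : AnalyticAt ℝ q1 p0 := ((af0.pow 2).add (af1.pow 2)).add (af2.pow 2)
  have aq2 : AnalyticAt ℝ q2 p0 :=
    (((af0.sub analyticAt_const).pow 2).add ((af1.sub analyticAt_const).pow 2)).add
      ((af2.sub analyticAt_const).pow 2)
  -- norm identities
  have hnorm1 : ∀ p : ℝ × ℝ × ℝ, ‖sph (h / p.1) p.2.1 p.2.2‖ = Real.sqrt (q1 p) := by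
    intro p
    rw [euc_norm_eq, sph_apply0, sph_apply1, sph_apply2]
  have hsub : ∀ (p : ℝ × ℝ × ℝ) (i : Fin 3),
      (sph (h / p.1) p.2.1 p.2.2 - x') i = sph (h / p.1) p.2.1 p.2.2 i - x' i := by
    intro p i; rfl
  have hnorm2 : ∀ p : ℝ × ℝ × ℝ, ‖sph (h / p.1) p.2.1 p.2.2 - x'‖ = Real.sqrt (q2 p) := by
    intro p
    rw [euc_norm_eq, hsub, hsub, hsub, sph_apply0, sph_apply1, sph_apply2]
  -- positivity at the base point
  have hq1pos : 0 < q1 p0 := by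
    have : Real.sqrt (q1 p0) = h / s := by
      rw [← hnorm1 p0]; exact norm_sph _ _ _ (le_of_lt hrpos)
    have h2 : 0 < Real.sqrt (q1 p0) := this ▸ hrpos
    exact Real.sqrt_pos.1 h2
  have hlt : ‖x'‖ < h / s := by
    have : h < h / s := by
      rw [lt_div_iff₀ hs0]
      nlinarith
    exact lt_of_le_of_lt hx' this
  have hne : sph (h / s) θ φ ≠ x' := by
    intro hcontra
    rw [← hcontra, norm_sph _ _ _ (le_of_lt hrpos)] at hlt
    exact lt_irrefl _ hlt
  have hq2pos : 0 < q2 p0 := by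
    have h1 : 0 < ‖sph (h / s) θ φ - x'‖ := by
      rw [norm_pos_iff]; exact sub_ne_zero_of_ne hne
    have h2 : ‖sph (h / p0.1) p0.2.1 p0.2.2 - x'‖ = Real.sqrt (q2 p0) := hnorm2 p0
    rw [← Real.sqrt_pos]
    rw [← h2]
    exact h1
  -- analytic norms
  have an1 : AnalyticAt ℝ (fun p => Real.sqrt (q1 p)) p0 :=
    (analyticAt_rsqrt hq1pos).comp aq1
  have an2 : AnalyticAt ℝ (fun p => Real.sqrt (q2 p)) p0 :=
    (analyticAt_rsqrt hq2pos).comp aq2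
  have hn2ne : Real.sqrt (q2 p0) ≠ 0 := ne_of_gt (Real.sqrt_pos.2 hq2pos)
  -- assemble
  have aratio : AnalyticAt ℝ (fun p => Real.sqrt (q1 p) / Real.sqrt (q2 p)) p0 :=
    an1.div an2 hn2ne
  have acoe : ∀ g : ℝ × ℝ × ℝ → ℝ, AnalyticAt ℝ g p0 →
      AnalyticAt ℝ (fun p => (g p : ℂ)) p0 := fun g hg =>
    (Complex.ofRealCLM.analyticAt _).comp hg
  have aexp : AnalyticAt ℝ
      (fun p => Complex.exp (Complex.I * κ * ((Real.sqrt (q2 p) : ℂ) - (Real.sqrt (q1 p) : ℂ))))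
      p0 := by
    have inner : AnalyticAt ℝ
        (fun p => Complex.I * κ * ((Real.sqrt (q2 p) : ℂ) - (Real.sqrt (q1 p) : ℂ))) p0 :=
      analyticAt_const.mul ((acoe _ an2).sub (acoe _ an1))
    exact ((Complex.differentiable_exp.analyticAt _).restrictScalars).comp inner
  have atotal : AnalyticAt ℝ
      (fun p => ((Real.sqrt (q1 p) / Real.sqrt (q2 p) : ℝ) : ℂ) *
        Complex.exp (Complex.I * κ * ((Real.sqrt (q2 p) : ℂ) - (Real.sqrt (q1 p) : ℂ)))) p0 :=
    (acoe _ aratio).mul aexp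
  apply atotal.congr
  apply Filter.Eventually.of_forall
  intro p
  simp only [gS, hnorm1 p, hnorm2 p]
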